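/- Let $(X,\omega)$ be a pre-$n$-plectic manifold, and let $v_1, \ldots, v_{k+1}$ be Hamiltonian vector fields for $\omega$ with $k \geq 1$. Then $d\,\iota_{v_1 \wedge \cdots \wedge v_k}\omega = \sum_{i<j} (-1)^{i+j+k}\, \iota_{[v_i,v_j] \wedge v_1 \wedge \cdots \wedge \hat v_i \wedge \cdots \wedge \hat v_j \wedge \cdots \wedge v_k}\omega$. -/

import Mathlib

/-- An abstract (ungraded) Cartan calculus: a Lie algebra `V` of vector fields
acting on a module `Ω` of differential forms by interior products `ι`, together
with the de Rham differential `d`, satisfying the standard Cartan identities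
(`d² = 0`, `ι_v ι_v = 0` and `ι_{[u,v]} = [𝓛_u, ι_v]` with
`𝓛_v = d ∘ ι_v + ι_v ∘ d`). -/
structure CartanModule (V : Type*) [LieRing V] [LieAlgebra ℝ V]
    (Ω : Type*) [AddCommGroup Ω] [Module ℝ Ω] where
  d : Ω →ₗ[ℝ] Ω
  ι : V →ₗ[ℝ] Ω →ₗ[ℝ] Ω
  d_sq : ∀ α : Ω, d (d α) = 0
  ι_ι : ∀ (v : V) (α : Ω), ι v (ι v α) = 0
  cartan_comm : ∀ (u v : V) (α : Ω),
    ι ⁅u, v⁆ α =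
      (d (ι u (ι v α)) + ι u (d (ι v α))) - ι v (d (ι u α) + ι u (d α))

namespace CartanModule

variable {V : Type*} [LieRing V] [LieAlgebra ℝ V]
  {Ω : Type*} [AddCommGroup Ω] [Module ℝ Ω]

/-- The Lie derivative along a vector field, via Cartan's magic formula. -/
def lieD (C : CartanModule V Ω) (v : V) (α : Ω) : Ω :=
  C.d (C.ι v α) + C.ι v (C.d α)

/-- Iterated interior product with a decomposable multivector field
`v₁ ∧ ⋯ ∧ v_k` (encoded as the list `[v₁, …, v_k]`):
`ι_{v₁ ∧ ⋯ ∧ v_k} = ι_{v_k} ∘ ⋯ ∘ ι_{v₁}`. -/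
def ιList (C : CartanModule V Ω) : List V → Ω → Ω
  | [], α => α
  | v :: l, α => C.ιList l (C.ι v α)

end CartanModule

namespace CartanModule

variable {V : Type*} [LieRing V] [LieAlgebra ℝ V]
  {Ω : Type*} [AddCommGroup Ω] [Module ℝ Ω]
  (C : CartanModule V Ω)

lemma ι_anticomm (u v : V) (α : Ω) :
    C.ι u (C.ι v α) = - C.ι v (C.ι u α) := by
  have h := C.ι_ι (u + v) α
  simp only [map_add, LinearMap.add_apply, C.ι_ι, zero_add, add_zero] at h
  exact eq_neg_of_add_eq_zero_right h

lemma ιList_append (l₁ l₂ : List V) (α : Ω) :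
    C.ιList (l₁ ++ l₂) α = C.ιList l₂ (C.ιList l₁ α) := by
  induction l₁ generalizing α with
  | nil => rfl
  | cons v t ih => exact ih (C.ι v α)

lemma ιList_add (l : List V) (α β : Ω) :
    C.ιList l (α + β) = C.ιList l α + C.ιList l β := by
  induction l generalizing α β with
  | nil => rfl
  | cons v t ih => simp only [ιList, map_add, ih]

lemma ιList_zero (l : List V) : C.ιList l (0 : Ω) = 0 := by
  induction l with
  | nil => rfl
  | cons v t ih => simp only [ιList, map_zero, ih]

lemma ιList_neg (l : List V) (α : Ω) : C.ιList l (-α) = - C.ιList l α := by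
  induction l generalizing α with
  | nil => rfl
  | cons v t ih => simp only [ιList, map_neg, ih]

lemma ιList_smul (l : List V) (c : ℝ) (α : Ω) :
    C.ιList l (c • α) = c • C.ιList l α := by
  induction l generalizing α with
  | nil => rfl
  | cons v t ih => simp only [ιList, map_smul, ih]

lemma lieD_ι (u v : V) (α : Ω) :
    C.lieD u (C.ι v α) = C.ι v (C.lieD u α) + C.ι ⁅u, v⁆ α := by
  have h := C.cartan_comm u v α
  unfold lieD
  rw [h]
  abel

lemma lieD_closed (v : V) (ω : Ω) (hω : C.d ω = 0) (H : Ω)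
    (h : C.ι v ω + C.d H = 0) : C.lieD v ω = 0 := by
  have hv : C.ι v ω = - C.d H := eq_neg_of_add_eq_zero_left h
  unfold lieD
  rw [hω, map_zero, add_zero, hv, map_neg, C.d_sq, neg_zero]

lemma lieD_ιList (u : V) (l : List V) (α : Ω) :
    C.lieD u (C.ιList l α) = C.ιList l (C.lieD u α)
      + ∑ j ∈ Finset.range l.length,
          (-1 : ℝ) ^ j • C.ιList (l.eraseIdx j) (C.ι ⁅u, l.getD j 0⁆ α) := by
  induction l generalizing α with
  | nil => simp [ιList]
  | cons v t ih =>
    show C.lieD u (C.ιList t (C.ι v α)) = _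
    rw [ih, lieD_ι, ιList_add]
    have hlen : (v :: t).length = t.length + 1 := rfl
    rw [hlen, Finset.sum_range_succ' _ t.length]
    simp only [List.eraseIdx_cons_succ, List.eraseIdx_cons_zero,
      List.getD_cons_succ, List.getD_cons_zero, pow_zero, one_smul]
    have hterm : ∀ j ∈ Finset.range t.length,
        (-1 : ℝ) ^ j • C.ιList (t.eraseIdx j) (C.ι ⁅u, t.getD j 0⁆ (C.ι v α))
          = (-1 : ℝ) ^ (j + 1) •
              C.ιList (v :: t.eraseIdx j) (C.ι ⁅u, t.getD j 0⁆ α) := by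
      intro j _
      have h1 : C.ι ⁅u, t.getD j 0⁆ (C.ι v α) = - C.ι v (C.ι ⁅u, t.getD j 0⁆ α) :=
        C.ι_anticomm _ _ _
      rw [h1, ιList_neg, smul_neg, pow_succ, mul_smul, neg_one_smul, smul_neg]
      rfl
    rw [Finset.sum_congr rfl hterm]
    have hA : C.ιList (v :: t) (C.lieD u α) = C.ιList t (C.ι v (C.lieD u α)) := rfl
    rw [hA]
    abel

/-- Main auxiliary identity, with `Finset.range` sums and `getD` indexing. -/
lemma d_ιList_aux (ω : Ω) (hω : C.d ω = 0) (l : List V)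
    (hHam : ∀ v ∈ l, C.lieD v ω = 0) :
    C.d (C.ιList l ω)
      = ∑ i ∈ Finset.range l.length, ∑ j ∈ Finset.range l.length,
          if i < j then
            ((-1 : ℝ) ^ (i + j + l.length)) •
              C.ιList (⁅l.getD i 0, l.getD j 0⁆ :: ((l.eraseIdx j).eraseIdx i)) ω
          else 0 := by
  induction l using List.reverseRecOn with
  | nil => simpa [ιList] using hω
  | append_singleton L w ih =>
    have hHamL : ∀ v ∈ L, C.lieD v ω = 0 := fun v hv => hHam v (List.mem_append_left _ hv)
    have hw : C.lieD w ω = 0 := hHam w (List.mem_append_right _ (List.mem_singleton_self w))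
    have hL1 : C.ιList (L ++ [w]) ω = C.ι w (C.ιList L ω) := by
      rw [ιList_append]; rfl
    have hd : C.d (C.ι w (C.ιList L ω))
        = C.lieD w (C.ιList L ω) - C.ι w (C.d (C.ιList L ω)) := by
      show _ = (C.d (C.ι w (C.ιList L ω)) + C.ι w (C.d (C.ιList L ω))) - _
      abel
    have hlen : (L ++ [w]).length = L.length + 1 := by
      rw [List.length_append, List.length_singleton]
    rw [hL1, hd, lieD_ιList, hw, ιList_zero, zero_add, ih hHamL]
    rw [map_sum]
    simp only [map_sum, apply_ite (C.ι w), map_smul, map_zero]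
    rw [hlen, Finset.sum_range_succ]
    have hrow : (∑ j ∈ Finset.range (L.length + 1),
        if L.length < j then
          ((-1:ℝ) ^ (L.length + j + (L.length + 1))) •
            C.ιList (⁅(L ++ [w]).getD L.length 0, (L ++ [w]).getD j 0⁆ ::
              (((L ++ [w]).eraseIdx j).eraseIdx L.length)) ω
        else 0) = 0 :=
      Finset.sum_eq_zero (fun j hj => if_neg (by have := Finset.mem_range.mp hj; omega))
    rw [hrow, add_zero]
    have hsplit : ∀ i ∈ Finset.range L.length,
        (∑ j ∈ Finset.range (L.length + 1),
          if i < j then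
            ((-1:ℝ) ^ (i + j + (L.length + 1))) •
              C.ιList (⁅(L ++ [w]).getD i 0, (L ++ [w]).getD j 0⁆ ::
                (((L ++ [w]).eraseIdx j).eraseIdx i)) ω
          else 0)
        = (∑ j ∈ Finset.range L.length,
            -(if i < j then
              ((-1:ℝ) ^ (i + j + L.length)) •
                C.ι w (C.ιList (⁅L.getD i 0, L.getD j 0⁆ ::
                  ((L.eraseIdx j).eraseIdx i)) ω)
            else 0))
          + (-1:ℝ) ^ i • C.ιList (L.eraseIdx i) (C.ι ⁅w, L.getD i 0⁆ ω) := by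
      intro i hi
      have hi' : i < L.length := Finset.mem_range.mp hi
      rw [Finset.sum_range_succ]
      congr 1
      · apply Finset.sum_congr rfl
        intro j hj
        have hj' : j < L.length := Finset.mem_range.mp hj
        by_cases hij : i < j
        · rw [if_pos hij, if_pos hij]
          have hlen2 : (L.eraseIdx j).length = L.length - 1 := by
            rw [List.length_eraseIdx, if_pos hj']
          rw [List.getD_append L [w] 0 i hi', List.getD_append L [w] 0 j hj',
            List.eraseIdx_append_of_lt_length hj' [w],
            List.eraseIdx_append_of_lt_length (by rw [hlen2]; omega) [w]]
          have hmove : C.ιList (⁅L.getD i 0, L.getD j 0⁆ ::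
              ((L.eraseIdx j).eraseIdx i ++ [w])) ω
              = C.ι w (C.ιList (⁅L.getD i 0, L.getD j 0⁆ ::
                  ((L.eraseIdx j).eraseIdx i)) ω) := by
            rw [show (⁅L.getD i 0, L.getD j 0⁆ :: ((L.eraseIdx j).eraseIdx i ++ [w]))
                = (⁅L.getD i 0, L.getD j 0⁆ :: (L.eraseIdx j).eraseIdx i) ++ [w] from rfl,
              ιList_append]
            rfl
          have hsign : (-1:ℝ) ^ (i + j + (L.length + 1))
              = -(-1:ℝ) ^ (i + j + L.length) := by
            have h : i + j + (L.length + 1) = (i + j + L.length) + 1 := by ring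
            rw [h, pow_succ]; ring
          rw [hmove, hsign, neg_smul]
        · rw [if_neg hij, if_neg hij, neg_zero]
      · rw [if_pos hi']
        have hg1 : (L ++ [w]).getD i 0 = L.getD i 0 := List.getD_append L [w] 0 i hi'
        have h1 : L.length < (L ++ [w]).length := by simp
        have hgn : (L ++ [w]).getD L.length 0 = w := by
          rw [List.getD_eq_getElem _ _ h1]
          exact List.getElem_concat_length rfl h1
        have hen : (L ++ [w]).eraseIdx L.length = L := by
          rw [List.eraseIdx_append_of_length_le (le_refl _), Nat.sub_self]
          simp
        have hsign : (-1:ℝ) ^ (i + L.length + (L.length + 1)) = -(-1:ℝ) ^ i := by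
          have h : i + L.length + (L.length + 1) = (i + 1) + 2 * L.length := by ring
          rw [h, pow_add, pow_mul, neg_one_sq, one_pow, mul_one, pow_succ]
          ring
        have hbr : C.ιList (⁅L.getD i 0, w⁆ :: L.eraseIdx i) ω
            = - C.ιList (L.eraseIdx i) (C.ι ⁅w, L.getD i 0⁆ ω) := by
          show C.ιList (L.eraseIdx i) (C.ι ⁅L.getD i 0, w⁆ ω) = _
          rw [← lie_skew, map_neg, LinearMap.neg_apply, ιList_neg]
        rw [hg1, hgn, hen, hsign, hbr, smul_neg, neg_smul, neg_neg]
    rw [Finset.sum_congr rfl hsplit, Finset.sum_add_distrib]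
    simp only [Finset.sum_neg_distrib]
    abel

end CartanModule

/-- Let `ω` be a closed form on a pre-`n`-plectic manifold and let
`v₁, …, v_k` (`k ≥ 1`, encoded as a nonempty list `l`) be Hamiltonian vector fields
for `ω`.  Then
`d ι_{v₁∧⋯∧v_k} ω = ∑_{i<j} (-1)^{i+j+k} ι_{[v_i,v_j] ∧ v₁ ∧ ⋯ v̂_i ⋯ v̂_j ⋯ ∧ v_k} ω`
(signs 1-based as in the paper; list indices 0-based, so `(-1)^{i+j+k}` becomes
`(-1)^{i₀+j₀+k}`). -/
theorem d_iterated_contraction_of_hamiltonian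
    {V : Type*} [LieRing V] [LieAlgebra ℝ V]
    {Ω : Type*} [AddCommGroup Ω] [Module ℝ Ω]
    (C : CartanModule V Ω) (ω : Ω) (hω : C.d ω = 0)
    (l : List V) (hl : l ≠ [])
    (hHam : ∀ v ∈ l, ∃ H : Ω, C.ι v ω + C.d H = 0) :
    C.d (C.ιList l ω)
      = ∑ i : Fin l.length, ∑ j : Fin l.length,
          if (i : ℕ) < (j : ℕ) then
            ((-1 : ℝ) ^ ((i : ℕ) + (j : ℕ) + l.length)) •
              C.ιList (⁅l.get i, l.get j⁆ :: ((l.eraseIdx (j : ℕ)).eraseIdx (i : ℕ))) ω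
          else 0 := by
  have key := C.d_ιList_aux ω hω l (fun v hv => by
    obtain ⟨H, hH⟩ := hHam v hv
    exact C.lieD_closed v ω hω H hH)
  rw [key, ← Fin.sum_univ_eq_sum_range]
  apply Finset.sum_congr rfl
  intro i _
  rw [← Fin.sum_univ_eq_sum_range]
  apply Finset.sum_congr rfl
  intro j _
  have hi : (i : ℕ) < l.length := i.isLt
  have hj : (j : ℕ) < l.length := j.isLt
  simp [List.get_eq_getElem, List.getD_eq_getElem _ _ hi, List.getD_eq_getElem _ _ hj]
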